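/- Suppose U is an ultrafilter on ω with the property: every monotone cofinal map h : U → W (W an ultrafilter) is, on some cofinal D ⊆ U, generated by a level-preserving monotone finitary map ĥ : D' → 2^{<ω} (where D' = {X↾k_m : X ∈ D, m < ω}) via h(X) = ⋃_m ĥ(X↾k_m). Then the Tukey type of U, and of every V ≤_T U, has cardinality at most continuum; in particular there are at most continuum many ultrafilters Tukey reducible to U. -/
import Mathlib


/-- The characteristic function of `X ∩ k` with domain `k`. -/
noncomputable def restr (X : Set ℕ) (k : ℕ) : List Bool :=
  (List.range k).map (fun i => @decide (i ∈ X) (Classical.propDecidable _))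

/-- `s ⊆ t` as characteristic functions of sets. -/
def lsubset (s t : List Bool) : Prop :=
  ∀ i, s.getD i false = true → t.getD i false = true

/-- The set `{X↾k_m : X ∈ 𝒟, m < ω}`. -/
def levelsOf (k : ℕ → ℕ) (𝒟 : Set (Set ℕ)) : Set (List Bool) :=
  {s | ∃ X ∈ 𝒟, ∃ m, s = restr X (k m)}

/-- `fh` generates `f` on `𝒟`: `f(X) = ⋃_m fh(X↾k_m)` for each `X ∈ 𝒟`. -/
def GeneratesOn (k : ℕ → ℕ) (fh : List Bool → List Bool)
    (f : Set ℕ → Set ℕ) (𝒟 : Set (Set ℕ)) : Prop :=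
  ∀ X ∈ 𝒟, f X = {i | ∃ m, (fh (restr X (k m))).getD i false = true}

/-- `C` is a cofinal subset (filter base) of the ultrafilter `U`. -/
def IsCofinalSub (U : Ultrafilter ℕ) (C : Set (Set ℕ)) : Prop :=
  (∀ X ∈ C, X ∈ U) ∧ ∀ X ∈ U, ∃ Y ∈ C, Y ⊆ X

/-- `f` is a cofinal map from `U` to `V`. -/
def IsCofinalMap (U V : Ultrafilter ℕ) (f : Set ℕ → Set ℕ) : Prop :=
  ∀ C : Set (Set ℕ), IsCofinalSub U C → IsCofinalSub V (f '' C)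

/-- `f` is monotone on `U`. -/
def MonotoneOnU (U : Ultrafilter ℕ) (f : Set ℕ → Set ℕ) : Prop :=
  ∀ X Y : Set ℕ, X ∈ U → Y ∈ U → Y ⊆ X → f Y ⊆ f X

/-- `V ≤_T U`. -/
def TukeyLEU (V U : Ultrafilter ℕ) : Prop := ∃ f, IsCofinalMap U V f

/-- `V ≡_T U`. -/
def TukeyEquivU (V U : Ultrafilter ℕ) : Prop := TukeyLEU V U ∧ TukeyLEU U V

lemma restr_getD_true (X : Set ℕ) (k i : ℕ) :
    (restr X k).getD i false = true ↔ i < k ∧ i ∈ X := by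
  unfold restr
  rcases lt_or_ge i k with hik | hik
  · rw [List.getD_eq_getElem?_getD]
    simp [List.getElem?_map, List.getElem?_range hik, hik]
  · rw [List.getD_eq_default]
    · simp; omega
    · simp; omega

lemma lsubset_restr {Y X : Set ℕ} (hYX : Y ⊆ X) (k : ℕ) :
    lsubset (restr Y k) (restr X k) := by
  intro i hi
  rw [restr_getD_true] at hi ⊢
  exact ⟨hi.1, hYX hi.2⟩

lemma univ_cofinalSub (U : Ultrafilter ℕ) : IsCofinalSub U {X | X ∈ U} :=
  ⟨fun _ hX => hX, fun X hX => ⟨X, hX, subset_rfl⟩⟩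

/-- Any cofinal map can be replaced by a monotone one. -/
lemma exists_monotone_cofinal {U V : Ultrafilter ℕ} (hV : TukeyLEU V U) :
    ∃ g, MonotoneOnU U g ∧ IsCofinalMap U V g := by
  obtain ⟨f, hf⟩ := hV
  have hfU := hf _ (univ_cofinalSub U)
  refine ⟨fun X => {i | ∃ Z, Z ∈ U ∧ Z ⊆ X ∧ i ∈ f Z}, ?_, ?_⟩
  · intro X Y _ _ hYX i hi
    obtain ⟨Z, hZ, hZY, hiZ⟩ := hi
    exact ⟨Z, hZ, hZY.trans hYX, hiZ⟩
  · intro C hC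
    constructor
    · rintro B ⟨X, hXC, rfl⟩
      have hXU : X ∈ U := hC.1 X hXC
      have hfX : f X ∈ V := hfU.1 (f X) ⟨X, hXU, rfl⟩
      exact Filter.mem_of_superset hfX (fun i hi => ⟨X, hXU, subset_rfl, hi⟩)
    · intro A hA
      -- find Y_A ∈ U such that all Z ∈ U below Y_A satisfy f Z ⊆ A
      have hYA : ∃ Y ∈ U, ∀ Z, Z ∈ U → Z ⊆ Y → f Z ⊆ A := by
        by_contra hcon
        push_neg at hcon
        have hC' : IsCofinalSub U {Z | Z ∈ U ∧ ¬ f Z ⊆ A} := by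
          refine ⟨fun Z hZ => hZ.1, fun Y hY => ?_⟩
          obtain ⟨Z, hZ1, hZ2, hZ3⟩ := hcon Y hY
          exact ⟨Z, ⟨hZ1, hZ3⟩, hZ2⟩
        obtain ⟨B, ⟨Z, hZ, rfl⟩, hBA⟩ := (hf _ hC').2 A hA
        exact hZ.2 hBA
      obtain ⟨Y, hYU, hYprop⟩ := hYA
      obtain ⟨X, hXC, hXY⟩ := hC.2 Y hYU
      refine ⟨_, ⟨X, hXC, rfl⟩, ?_⟩
      rintro i ⟨Z, hZU, hZX, hiZ⟩
      exact hYprop Z hZU (hZX.trans hXY) hiZ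

/-- Decoding: the ultrafilter V is determined by (k, fh, levelsOf k 𝒟) and U. -/
lemma decode_mem {U V : Ultrafilter ℕ} {g : Set ℕ → Set ℕ}
    (hgcof : IsCofinalMap U V g) {𝒟 : Set (Set ℕ)} {k : ℕ → ℕ}
    {fh : List Bool → List Bool} (h𝒟 : IsCofinalSub U 𝒟)
    (hmono : ∀ s ∈ levelsOf k 𝒟, ∀ t ∈ levelsOf k 𝒟,
      lsubset s t → lsubset (fh s) (fh t))
    (hgen : GeneratesOn k fh g 𝒟) (A : Set ℕ) :
    A ∈ V ↔ ∃ X, X ∈ U ∧ (∀ m, restr X (k m) ∈ levelsOf k 𝒟) ∧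
      {i | ∃ m, (fh (restr X (k m))).getD i false = true} ⊆ A := by
  have hg𝒟 := hgcof 𝒟 h𝒟
  constructor
  · intro hA
    obtain ⟨B, ⟨Y, hY𝒟, rfl⟩, hBA⟩ := hg𝒟.2 A hA
    refine ⟨Y, h𝒟.1 Y hY𝒟, fun m => ⟨Y, hY𝒟, m, rfl⟩, ?_⟩
    rw [hgen Y hY𝒟] at hBA
    exact hBA
  · rintro ⟨X, hXU, hXlev, hXA⟩
    obtain ⟨Y, hY𝒟, hYX⟩ := h𝒟.2 X hXU
    have hgY : g Y ∈ V := hg𝒟.1 (g Y) ⟨Y, hY𝒟, rfl⟩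
    refine Filter.mem_of_superset hgY ?_
    intro i hi
    rw [hgen Y hY𝒟] at hi
    obtain ⟨m, him⟩ := hi
    have hsub := hmono (restr Y (k m)) ⟨Y, hY𝒟, m, rfl⟩
      (restr X (k m)) (hXlev m) (lsubset_restr hYX (k m))
    exact hXA ⟨m, hsub i him⟩

lemma tukeyLEU_trans {W V U : Ultrafilter ℕ} (h1 : TukeyLEU W V) (h2 : TukeyLEU V U) :
    TukeyLEU W U := by
  obtain ⟨f, hf⟩ := h1
  obtain ⟨g, hg⟩ := h2
  refine ⟨f ∘ g, fun C hC => ?_⟩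
  have := hf (g '' C) (hg C hC)
  rwa [← Set.image_comp] at this

/-- If every monotone cofinal map on `U` is generated, on some cofinal `𝒟 ⊆ U`, by a
level-preserving monotone finitary map on `D' = {X↾k_m : X ∈ 𝒟}`, then the Tukey
type of `U`, and of every `V ≤_T U`, has cardinality at most continuum; in
particular, at most continuum many ultrafilters are Tukey reducible to `U`. -/
theorem tukey_type_le_continuum (U : Ultrafilter ℕ)
    (h : ∀ (W : Ultrafilter ℕ) (f : Set ℕ → Set ℕ),
      MonotoneOnU U f → IsCofinalMap U W f →
      ∃ (𝒟 : Set (Set ℕ)) (k : ℕ → ℕ) (fh : List Bool → List Bool),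
        IsCofinalSub U 𝒟 ∧ StrictMono k ∧
        (∀ s ∈ levelsOf k 𝒟, ∀ m, s.length = k m → (fh s).length = m) ∧
        (∀ s ∈ levelsOf k 𝒟, ∀ t ∈ levelsOf k 𝒟,
          lsubset s t → lsubset (fh s) (fh t)) ∧
        GeneratesOn k fh f 𝒟) :
    Cardinal.mk {V : Ultrafilter ℕ // TukeyEquivU V U} ≤ Cardinal.continuum ∧
    (∀ V : Ultrafilter ℕ, TukeyLEU V U →
      Cardinal.mk {W : Ultrafilter ℕ // TukeyEquivU W V} ≤ Cardinal.continuum) ∧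
    Cardinal.mk {V : Ultrafilter ℕ // TukeyLEU V U} ≤ Cardinal.continuum := by
  -- Main bound: at most continuum many V ≤_T U.
  have main : Cardinal.mk {V : Ultrafilter ℕ // TukeyLEU V U} ≤ Cardinal.continuum := by
    -- encode each such V by (k, fh, levelsOf k 𝒟)
    have henc : ∀ V : {V : Ultrafilter ℕ // TukeyLEU V U},
        ∃ c : (ℕ → ℕ) × (List Bool → List Bool) × Set (List Bool),
          ∀ A : Set ℕ, A ∈ V.1 ↔ ∃ X, X ∈ U ∧ (∀ m, restr X (c.1 m) ∈ c.2.2) ∧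
            {i | ∃ m, (c.2.1 (restr X (c.1 m))).getD i false = true} ⊆ A := by
      rintro ⟨V, hV⟩
      obtain ⟨g, hgmono, hgcof⟩ := exists_monotone_cofinal hV
      obtain ⟨𝒟, k, fh, h𝒟, -, -, hmono, hgen⟩ := h V g hgmono hgcof
      exact ⟨⟨k, fh, levelsOf k 𝒟⟩, decode_mem hgcof h𝒟 hmono hgen⟩
    choose enc henc' using henc
    have hinj : Function.Injective enc := by
      intro V₁ V₂ hEq
      apply Subtype.ext
      apply Ultrafilter.coe_injective
      ext A
      rw [Ultrafilter.mem_coe, Ultrafilter.mem_coe]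
      rw [henc' V₁ A, henc' V₂ A, hEq]
    calc Cardinal.mk {V : Ultrafilter ℕ // TukeyLEU V U}
        ≤ Cardinal.mk ((ℕ → ℕ) × (List Bool → List Bool) × Set (List Bool)) :=
          Cardinal.mk_le_of_injective hinj
      _ = Cardinal.continuum := by
          simp [Cardinal.mk_prod, Cardinal.mk_arrow, Cardinal.mk_set]
  refine ⟨?_, ?_, main⟩
  · refine le_trans (Cardinal.mk_le_of_injective (f := fun V => (⟨V.1, V.2.1⟩ :
      {V : Ultrafilter ℕ // TukeyLEU V U})) ?_) main
    intro a b hab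
    exact Subtype.ext (congrArg (Subtype.val (p := fun V => TukeyLEU V U)) hab)
  · intro V hVU
    refine le_trans (Cardinal.mk_le_of_injective (f := fun W => (⟨W.1, tukeyLEU_trans W.2.1 hVU⟩ :
      {V : Ultrafilter ℕ // TukeyLEU V U})) ?_) main
    intro a b hab
    exact Subtype.ext (congrArg (Subtype.val (p := fun V => TukeyLEU V U)) hab)
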